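/- A subset F ⊆ Q_θ is closed if and only if it satisfies all of the following conditions: (i) F ∩ Γ₁, F ∩ Γ₂, and F ∩ Γ₃ are closed in the subspace topologies of Γ₁, Γ₂, and Γ₃ respectively; (ii) if a point q((x₀), τ₀) ∈ Γ₂ ∪ Γ₃ (with x₀ ∈ ℂ², τ₀ ∈ ℝ) lies in the closure of F ∩ Γ₁, then q(x₀, τ) ∈ F for all τ ∈ ℝ; (iii) if a point q((0,0), τ₀) ∈ Γ₃ lies in the closure of F ∩ Γ₂', then q((0,0), τ₀ + k) ∈ F for all k ∈ ℤ; (iv) if a point q((0,0), τ₀) ∈ Γ₃ lies in the closure of F ∩ Γ₂'', then q((0,0), τ₀ + θk) ∈ F for all k ∈ ℤ. -/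

import Mathlib

open Filter Topology

/-- The equivalence relation `∼` on `ℂ² × ℝ`: `((z₁,z₂),τ) ∼ ((w₁,w₂),σ)` iff
`|z₁| = |w₁|`, `|z₂| = |w₂|`, and moreover `τ - σ ∈ ℤ` when `z₁ ≠ 0 = z₂`,
`τ - σ ∈ θℤ` when `z₁ = 0 ≠ z₂`, and `τ = σ` when `z₁ = z₂ = 0`. -/
def mrel (θ : ℝ) (p q : (ℂ × ℂ) × ℝ) : Prop :=
  ‖p.1.1‖ = ‖q.1.1‖ ∧
  ‖p.1.2‖ = ‖q.1.2‖ ∧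
  (p.1.1 ≠ 0 ∧ p.1.2 = 0 → ∃ k : ℤ, p.2 - q.2 = (k : ℝ)) ∧
  (p.1.1 = 0 ∧ p.1.2 ≠ 0 → ∃ k : ℤ, p.2 - q.2 = θ * (k : ℝ)) ∧
  (p.1.1 = 0 ∧ p.1.2 = 0 → p.2 = q.2)

theorem mrel_equivalence (θ : ℝ) : Equivalence (mrel θ) := by
  constructor
  · exact fun p => ⟨rfl, rfl, fun _ => ⟨0, by simp⟩, fun _ => ⟨0, by simp⟩, fun _ => rfl⟩
  · rintro p q ⟨h1, h2, h3, h4, h5⟩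
    have key : ∀ a b : ℂ, ‖a‖ = ‖b‖ → (a = 0 ↔ b = 0) := by
      intro a b h
      rw [← norm_eq_zero, h, norm_eq_zero]
    have e1 : p.1.1 = 0 ↔ q.1.1 = 0 := key _ _ h1
    have e2 : p.1.2 = 0 ↔ q.1.2 = 0 := key _ _ h2
    refine ⟨h1.symm, h2.symm, ?_, ?_, ?_⟩
    · rintro ⟨hq1, hq2⟩
      obtain ⟨k, hk⟩ := h3 ⟨fun h => hq1 (e1.mp h), e2.mpr hq2⟩
      exact ⟨-k, by push_cast; linarith⟩
    · rintro ⟨hq1, hq2⟩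
      obtain ⟨k, hk⟩ := h4 ⟨e1.mpr hq1, fun h => hq2 (e2.mp h)⟩
      exact ⟨-k, by push_cast; linarith⟩
    · rintro ⟨hq1, hq2⟩
      exact (h5 ⟨e1.mpr hq1, e2.mpr hq2⟩).symm
  · rintro p q r ⟨h1, h2, h3, h4, h5⟩ ⟨g1, g2, g3, g4, g5⟩
    have key : ∀ a b : ℂ, ‖a‖ = ‖b‖ → (a = 0 ↔ b = 0) := by
      intro a b h
      rw [← norm_eq_zero, h, norm_eq_zero]
    have e1 : p.1.1 = 0 ↔ q.1.1 = 0 := key _ _ h1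
    have e2 : p.1.2 = 0 ↔ q.1.2 = 0 := key _ _ h2
    refine ⟨h1.trans g1, h2.trans g2, ?_, ?_, ?_⟩
    · rintro ⟨hp1, hp2⟩
      obtain ⟨k, hk⟩ := h3 ⟨hp1, hp2⟩
      obtain ⟨l, hl⟩ := g3 ⟨fun h => hp1 (e1.mpr h), e2.mp hp2⟩
      exact ⟨k + l, by push_cast; linarith⟩
    · rintro ⟨hp1, hp2⟩
      obtain ⟨k, hk⟩ := h4 ⟨hp1, hp2⟩
      obtain ⟨l, hl⟩ := g4 ⟨e1.mp hp1, fun h => hp2 (e2.mpr h)⟩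
      refine ⟨k + l, by push_cast; linarith [mul_add θ (k : ℝ) (l : ℝ)]⟩
    · rintro ⟨hp1, hp2⟩
      exact (h5 ⟨hp1, hp2⟩).trans (g5 ⟨e1.mp hp1, e2.mp hp2⟩)

/-- The setoid on `ℂ² × ℝ` given by the relation `∼`. -/
def mSetoid (θ : ℝ) : Setoid ((ℂ × ℂ) × ℝ) := ⟨mrel θ, mrel_equivalence θ⟩

/-- The quotient space `Q_θ = (ℂ² × ℝ)/∼`, with the quotient topology. -/
abbrev Qspace (θ : ℝ) : Type := Quotient (mSetoid θ)

/-- The quotient map `q : ℂ² × ℝ → Q_θ`. -/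
def qmap (θ : ℝ) : (ℂ × ℂ) × ℝ → Qspace θ := Quotient.mk (mSetoid θ)


/-- `Γ₁ = q({((z₁,z₂),τ) : z₁ ≠ 0 and z₂ ≠ 0})`. -/
def Gamma1 (θ : ℝ) : Set (Qspace θ) := qmap θ '' {p | p.1.1 ≠ 0 ∧ p.1.2 ≠ 0}

/-- `Γ₂' = q({((z₁,z₂),τ) : z₁ ≠ 0 = z₂})`. -/
def Gamma2' (θ : ℝ) : Set (Qspace θ) := qmap θ '' {p | p.1.1 ≠ 0 ∧ p.1.2 = 0}

/-- `Γ₂'' = q({((z₁,z₂),τ) : z₁ = 0 ≠ z₂})`. -/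
def Gamma2'' (θ : ℝ) : Set (Qspace θ) := qmap θ '' {p | p.1.1 = 0 ∧ p.1.2 ≠ 0}

/-- `Γ₂ = Γ₂' ∪ Γ₂''`. -/
def Gamma2 (θ : ℝ) : Set (Qspace θ) := Gamma2' θ ∪ Gamma2'' θ

/-- `Γ₃ = q({((0,0),τ) : τ ∈ ℝ})`. -/
def Gamma3 (θ : ℝ) : Set (Qspace θ) := qmap θ '' {p | p.1.1 = 0 ∧ p.1.2 = 0}

section QAux

variable {θ : ℝ}

private lemma mrel_symm {p u : (ℂ × ℂ) × ℝ} (h : mrel θ p u) : mrel θ u p :=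
  (mrel_equivalence θ).symm h

private lemma mrel_z1 {p u : (ℂ × ℂ) × ℝ} (h : mrel θ p u) : p.1.1 = 0 ↔ u.1.1 = 0 := by
  rw [← norm_eq_zero, h.1, norm_eq_zero]

private lemma mrel_z2 {p u : (ℂ × ℂ) × ℝ} (h : mrel θ p u) : p.1.2 = 0 ↔ u.1.2 = 0 := by
  rw [← norm_eq_zero, h.2.1, norm_eq_zero]

private lemma continuous_qmap (θ : ℝ) : Continuous (qmap θ) := continuous_quotient_mk'

private lemma isQuotientMap_qmap (θ : ℝ) : IsQuotientMap (qmap θ) := isQuotientMap_quotient_mk'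

private lemma qmap_eq {p u : (ℂ × ℂ) × ℝ} (h : mrel θ p u) : qmap θ p = qmap θ u :=
  Quotient.sound h

private lemma qmap_exact {p u : (ℂ × ℂ) × ℝ} (h : qmap θ p = qmap θ u) : mrel θ p u :=
  Quotient.exact h

/-- The quotient map is open. -/
private lemma isOpenMap_qmap (θ : ℝ) : IsOpenMap (qmap θ) := by
  intro U hU
  rw [← (isQuotientMap_qmap θ).isOpen_preimage]
  rw [isOpen_iff_forall_mem_open]
  rintro p ⟨u, hu, hqu⟩
  have hrel : mrel θ p u := mrel_symm (qmap_exact hqu)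
  obtain ⟨⟨z₁, z₂⟩, τ⟩ := p
  obtain ⟨⟨w₁, w₂⟩, σ⟩ := u
  by_cases h1 : z₁ = 0 <;> by_cases h2 : z₂ = 0
  · -- z₁ = z₂ = 0 : then u = p
    have hw1 : w₁ = 0 := (mrel_z1 hrel).mp h1
    have hw2 : w₂ = 0 := (mrel_z2 hrel).mp h2
    have hτ : τ = σ := hrel.2.2.2.2 ⟨h1, h2⟩
    subst h1 h2 hw1 hw2 hτ
    exact ⟨U, fun q hq => ⟨q, hq, rfl⟩, hU, hu⟩
  · -- z₁ = 0, z₂ ≠ 0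
    set φ : (ℂ × ℂ) × ℝ → (ℂ × ℂ) × ℝ :=
      fun q => ((q.1.1, w₂ * ((‖q.1.2‖ / ‖z₂‖ : ℝ) : ℂ)), σ + (q.2 - τ))
      with hφ
    have hφc : Continuous φ := by
      refine Continuous.prodMk (Continuous.prodMk continuous_fst.fst ?_)
        (continuous_const.add (continuous_snd.sub continuous_const))
      exact continuous_const.mul (Complex.continuous_ofReal.comp
        ((continuous_norm.comp continuous_fst.snd).div_const _))
    have hφp : φ ((z₁, z₂), τ) = ((w₁, w₂), σ) := by
      have hz1w : w₁ = z₁ := by rw [h1, ← ((mrel_z1 hrel).mp h1)]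
      simp [hφ, hz1w, div_self (Complex.ofReal_ne_zero.mpr (norm_ne_zero_iff.mpr h2)), h1]
    refine ⟨φ ⁻¹' U ∩ {q | q.1.2 ≠ 0}, ?_,
      (hU.preimage hφc).inter (isOpen_compl_singleton.preimage
        (continuous_fst.snd : Continuous fun q : (ℂ × ℂ) × ℝ => q.1.2)),
      ⟨by rw [Set.mem_preimage, hφp]; exact hu, h2⟩⟩
    rintro q ⟨hqU, hq2⟩
    have hm : mrel θ q (φ q) := by
      refine ⟨rfl, ?_, ?_, ?_, ?_⟩
      · simp only [hφ, norm_mul, Complex.norm_real, Real.norm_eq_abs,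
          abs_of_nonneg (div_nonneg (norm_nonneg _) (norm_nonneg _))]
        rw [← hrel.2.1, mul_comm, div_mul_cancel₀ _ (norm_ne_zero_iff.mpr h2)]
      · rintro ⟨_, hc⟩; exact absurd hc hq2
      · rintro ⟨hq1, _⟩
        obtain ⟨k, hk⟩ := hrel.2.2.2.1 ⟨h1, h2⟩
        refine ⟨k, ?_⟩
        have : q.2 - (φ q).2 = τ - σ := by simp [hφ]; ring
        rw [this, hk]
      · rintro ⟨_, hc⟩; exact absurd hc hq2
    exact ⟨φ q, hqU, (qmap_eq hm).symm⟩
  · -- z₁ ≠ 0, z₂ = 0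
    set φ : (ℂ × ℂ) × ℝ → (ℂ × ℂ) × ℝ :=
      fun q => ((w₁ * ((‖q.1.1‖ / ‖z₁‖ : ℝ) : ℂ), q.1.2), σ + (q.2 - τ))
      with hφ
    have hφc : Continuous φ := by
      refine Continuous.prodMk (Continuous.prodMk ?_ continuous_fst.snd)
        (continuous_const.add (continuous_snd.sub continuous_const))
      exact continuous_const.mul (Complex.continuous_ofReal.comp
        ((continuous_norm.comp continuous_fst.fst).div_const _))
    have hφp : φ ((z₁, z₂), τ) = ((w₁, w₂), σ) := by
      have hz2w : w₂ = z₂ := by rw [h2, ← ((mrel_z2 hrel).mp h2)]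
      simp [hφ, hz2w, div_self (Complex.ofReal_ne_zero.mpr (norm_ne_zero_iff.mpr h1)), h2]
    refine ⟨φ ⁻¹' U ∩ {q | q.1.1 ≠ 0}, ?_,
      (hU.preimage hφc).inter (isOpen_compl_singleton.preimage
        (continuous_fst.fst : Continuous fun q : (ℂ × ℂ) × ℝ => q.1.1)),
      ⟨by rw [Set.mem_preimage, hφp]; exact hu, h1⟩⟩
    rintro q ⟨hqU, hq1⟩
    have hm : mrel θ q (φ q) := by
      refine ⟨?_, rfl, ?_, ?_, ?_⟩
      · simp only [hφ, norm_mul, Complex.norm_real, Real.norm_eq_abs,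
          abs_of_nonneg (div_nonneg (norm_nonneg _) (norm_nonneg _))]
        rw [← hrel.1, mul_comm, div_mul_cancel₀ _ (norm_ne_zero_iff.mpr h1)]
      · rintro ⟨_, _⟩
        obtain ⟨k, hk⟩ := hrel.2.2.1 ⟨h1, h2⟩
        refine ⟨k, ?_⟩
        have : q.2 - (φ q).2 = τ - σ := by simp [hφ]; ring
        rw [this, hk]
      · rintro ⟨hc, _⟩; exact absurd hc hq1
      · rintro ⟨hc, _⟩; exact absurd hc hq1
    exact ⟨φ q, hqU, (qmap_eq hm).symm⟩
  · -- z₁ ≠ 0, z₂ ≠ 0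
    set φ : (ℂ × ℂ) × ℝ → (ℂ × ℂ) × ℝ :=
      fun q => ((w₁ * ((‖q.1.1‖ / ‖z₁‖ : ℝ) : ℂ),
                 w₂ * ((‖q.1.2‖ / ‖z₂‖ : ℝ) : ℂ)), σ)
      with hφ
    have hφc : Continuous φ := by
      refine Continuous.prodMk (Continuous.prodMk ?_ ?_) continuous_const
      · exact continuous_const.mul (Complex.continuous_ofReal.comp
          ((continuous_norm.comp continuous_fst.fst).div_const _))
      · exact continuous_const.mul (Complex.continuous_ofReal.comp
          ((continuous_norm.comp continuous_fst.snd).div_const _))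
    have hφp : φ ((z₁, z₂), τ) = ((w₁, w₂), σ) := by
      simp [hφ, div_self (Complex.ofReal_ne_zero.mpr (norm_ne_zero_iff.mpr h1)), div_self (Complex.ofReal_ne_zero.mpr (norm_ne_zero_iff.mpr h2))]
    refine ⟨φ ⁻¹' U ∩ ({q | q.1.1 ≠ 0} ∩ {q | q.1.2 ≠ 0}), ?_,
      (hU.preimage hφc).inter ((isOpen_compl_singleton.preimage
        (continuous_fst.fst : Continuous fun q : (ℂ × ℂ) × ℝ => q.1.1)).inter
        (isOpen_compl_singleton.preimage
        (continuous_fst.snd : Continuous fun q : (ℂ × ℂ) × ℝ => q.1.2))),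
      ⟨by rw [Set.mem_preimage, hφp]; exact hu, h1, h2⟩⟩
    rintro q ⟨hqU, hq1, hq2⟩
    have hm : mrel θ q (φ q) := by
      refine ⟨?_, ?_, ?_, ?_, ?_⟩
      · simp only [hφ, norm_mul, Complex.norm_real, Real.norm_eq_abs,
          abs_of_nonneg (div_nonneg (norm_nonneg _) (norm_nonneg _))]
        rw [← hrel.1, mul_comm, div_mul_cancel₀ _ (norm_ne_zero_iff.mpr h1)]
      · simp only [hφ, norm_mul, Complex.norm_real, Real.norm_eq_abs,
          abs_of_nonneg (div_nonneg (norm_nonneg _) (norm_nonneg _))]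
        rw [← hrel.2.1, mul_comm, div_mul_cancel₀ _ (norm_ne_zero_iff.mpr h2)]
      · rintro ⟨_, hc⟩; exact absurd hc hq2
      · rintro ⟨hc, _⟩; exact absurd hc hq1
      · rintro ⟨hc, _⟩; exact absurd hc hq1
    exact ⟨φ q, hqU, (qmap_eq hm).symm⟩

private lemma preimage_inter_image (F : Set (Qspace θ)) (S : Set ((ℂ × ℂ) × ℝ))
    (hS : ∀ p u, mrel θ p u → u ∈ S → p ∈ S) :
    qmap θ ⁻¹' (F ∩ qmap θ '' S) = qmap θ ⁻¹' F ∩ S := by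
  ext p
  constructor
  · rintro ⟨hF, u, hu, hq⟩
    exact ⟨hF, hS p u (qmap_exact hq.symm) hu⟩
  · rintro ⟨hF, hp⟩
    exact ⟨hF, p, hp, rfl⟩

private lemma mem_of_closed_sub {F G : Set (Qspace θ)}
    (h : IsClosed {x : G | (x : Qspace θ) ∈ F}) {y : Qspace θ}
    (hyG : y ∈ G) (hy : y ∈ closure (F ∩ G)) : y ∈ F := by
  obtain ⟨C, hC, hCs⟩ := isClosed_induced_iff.mp h
  have hsub : F ∩ G ⊆ C := by
    rintro w ⟨hwF, hwG⟩
    have : (⟨w, hwG⟩ : G) ∈ Subtype.val ⁻¹' C := by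
      rw [hCs]; exact hwF
    exact this
  have hyC : y ∈ C := closure_minimal hsub hC hy
  have : (⟨y, hyG⟩ : G) ∈ Subtype.val ⁻¹' C := hyC
  rw [hCs] at this
  exact this

end QAux
/-- A subset `F ⊆ Q_θ` is closed if and only if:
(i) `F ∩ Γ₁`, `F ∩ Γ₂` and `F ∩ Γ₃` are closed in the subspace topologies of `Γ₁`, `Γ₂`, `Γ₃`;
(ii) if `q(x₀, τ₀) ∈ Γ₂ ∪ Γ₃` lies in the closure of `F ∩ Γ₁`, then `q(x₀, τ) ∈ F` for
all `τ ∈ ℝ`;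
(iii) if `q((0,0), τ₀) ∈ Γ₃` lies in the closure of `F ∩ Γ₂'`, then `q((0,0), τ₀ + k) ∈ F`
for all `k ∈ ℤ`;
(iv) if `q((0,0), τ₀) ∈ Γ₃` lies in the closure of `F ∩ Γ₂''`, then `q((0,0), τ₀ + θk) ∈ F`
for all `k ∈ ℤ`. -/
theorem isClosed_iff_Qspace (θ : ℝ) (hθ : Irrational θ) (F : Set (Qspace θ)) :
    IsClosed F ↔
      ((IsClosed {x : (Gamma1 θ) | (x : Qspace θ) ∈ F} ∧
        IsClosed {x : (Gamma2 θ) | (x : Qspace θ) ∈ F} ∧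
        IsClosed {x : (Gamma3 θ) | (x : Qspace θ) ∈ F}) ∧
      (∀ (x₀ : ℂ × ℂ) (τ₀ : ℝ), qmap θ (x₀, τ₀) ∈ Gamma2 θ ∪ Gamma3 θ →
        qmap θ (x₀, τ₀) ∈ closure (F ∩ Gamma1 θ) → ∀ τ : ℝ, qmap θ (x₀, τ) ∈ F) ∧
      (∀ τ₀ : ℝ, qmap θ ((0, 0), τ₀) ∈ closure (F ∩ Gamma2' θ) →
        ∀ k : ℤ, qmap θ ((0, 0), τ₀ + (k : ℝ)) ∈ F) ∧
      (∀ τ₀ : ℝ, qmap θ ((0, 0), τ₀) ∈ closure (F ∩ Gamma2'' θ) →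
        ∀ k : ℤ, qmap θ ((0, 0), τ₀ + θ * (k : ℝ)) ∈ F)) := by
  have sat₁ : ∀ p u : (ℂ × ℂ) × ℝ, mrel θ p u → (u.1.1 ≠ 0 ∧ u.1.2 ≠ 0) →
      (p.1.1 ≠ 0 ∧ p.1.2 ≠ 0) :=
    fun p u h hu => ⟨fun h0 => hu.1 ((mrel_z1 h).mp h0), fun h0 => hu.2 ((mrel_z2 h).mp h0)⟩
  have sat₂' : ∀ p u : (ℂ × ℂ) × ℝ, mrel θ p u → (u.1.1 ≠ 0 ∧ u.1.2 = 0) →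
      (p.1.1 ≠ 0 ∧ p.1.2 = 0) :=
    fun p u h hu => ⟨fun h0 => hu.1 ((mrel_z1 h).mp h0), (mrel_z2 h).mpr hu.2⟩
  have sat₂'' : ∀ p u : (ℂ × ℂ) × ℝ, mrel θ p u → (u.1.1 = 0 ∧ u.1.2 ≠ 0) →
      (p.1.1 = 0 ∧ p.1.2 ≠ 0) :=
    fun p u h hu => ⟨(mrel_z1 h).mpr hu.1, fun h0 => hu.2 ((mrel_z2 h).mp h0)⟩
  constructor
  · intro hF
    have hEc : IsClosed (qmap θ ⁻¹' F) := hF.preimage (continuous_qmap θ)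
    refine ⟨⟨hF.preimage continuous_subtype_val, hF.preimage continuous_subtype_val,
      hF.preimage continuous_subtype_val⟩, ?_, ?_, ?_⟩
    · intro x₀ τ₀ _ hcl τ
      have h1 : (x₀, τ₀) ∈ closure (qmap θ ⁻¹' (F ∩ Gamma1 θ)) := by
        rw [← (isOpenMap_qmap θ).preimage_closure_eq_closure_preimage (continuous_qmap θ)]
        exact hcl
      have hpe : qmap θ ⁻¹' (F ∩ Gamma1 θ) =
          qmap θ ⁻¹' F ∩ {p : (ℂ × ℂ) × ℝ | p.1.1 ≠ 0 ∧ p.1.2 ≠ 0} :=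
        preimage_inter_image F _ sat₁
      rw [hpe] at h1
      have hg : Continuous (fun p : (ℂ × ℂ) × ℝ => (p.1, τ)) :=
        continuous_fst.prodMk continuous_const
      have himg : (fun p : (ℂ × ℂ) × ℝ => (p.1, τ)) ''
          (qmap θ ⁻¹' F ∩ {p : (ℂ × ℂ) × ℝ | p.1.1 ≠ 0 ∧ p.1.2 ≠ 0}) ⊆ qmap θ ⁻¹' F := by
        rintro _ ⟨p, ⟨hpF, hp1, hp2⟩, rfl⟩
        have hm : mrel θ (p.1, τ) p :=
          ⟨rfl, rfl, fun h => absurd h.2 hp2, fun h => absurd h.1 hp1, fun h => absurd h.1 hp1⟩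
        show qmap θ (p.1, τ) ∈ F
        rw [qmap_eq hm]; exact hpF
      exact hEc.closure_subset (closure_mono himg
        (image_closure_subset_closure_image hg ⟨(x₀, τ₀), h1, rfl⟩))
    · intro τ₀ hcl k
      have h1 : (((0 : ℂ), (0 : ℂ)), τ₀) ∈ closure (qmap θ ⁻¹' (F ∩ Gamma2' θ)) := by
        rw [← (isOpenMap_qmap θ).preimage_closure_eq_closure_preimage (continuous_qmap θ)]
        exact hcl
      have hpe : qmap θ ⁻¹' (F ∩ Gamma2' θ) =
          qmap θ ⁻¹' F ∩ {p : (ℂ × ℂ) × ℝ | p.1.1 ≠ 0 ∧ p.1.2 = 0} :=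
        preimage_inter_image F _ sat₂'
      rw [hpe] at h1
      have hg : Continuous (fun p : (ℂ × ℂ) × ℝ => (p.1, p.2 + (k : ℝ))) :=
        continuous_fst.prodMk (continuous_snd.add continuous_const)
      have himg : (fun p : (ℂ × ℂ) × ℝ => (p.1, p.2 + (k : ℝ))) ''
          (qmap θ ⁻¹' F ∩ {p : (ℂ × ℂ) × ℝ | p.1.1 ≠ 0 ∧ p.1.2 = 0}) ⊆ qmap θ ⁻¹' F := by
        rintro _ ⟨p, ⟨hpF, hp1, hp2⟩, rfl⟩
        have hm : mrel θ (p.1, p.2 + (k : ℝ)) p :=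
          ⟨rfl, rfl, fun _ => ⟨k, by ring⟩, fun h => absurd h.1 hp1, fun h => absurd h.1 hp1⟩
        show qmap θ (p.1, p.2 + (k : ℝ)) ∈ F
        rw [qmap_eq hm]; exact hpF
      exact hEc.closure_subset (closure_mono himg
        (image_closure_subset_closure_image hg ⟨_, h1, rfl⟩))
    · intro τ₀ hcl k
      have h1 : (((0 : ℂ), (0 : ℂ)), τ₀) ∈ closure (qmap θ ⁻¹' (F ∩ Gamma2'' θ)) := by
        rw [← (isOpenMap_qmap θ).preimage_closure_eq_closure_preimage (continuous_qmap θ)]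
        exact hcl
      have hpe : qmap θ ⁻¹' (F ∩ Gamma2'' θ) =
          qmap θ ⁻¹' F ∩ {p : (ℂ × ℂ) × ℝ | p.1.1 = 0 ∧ p.1.2 ≠ 0} :=
        preimage_inter_image F _ sat₂''
      rw [hpe] at h1
      have hg : Continuous (fun p : (ℂ × ℂ) × ℝ => (p.1, p.2 + θ * (k : ℝ))) :=
        continuous_fst.prodMk (continuous_snd.add continuous_const)
      have himg : (fun p : (ℂ × ℂ) × ℝ => (p.1, p.2 + θ * (k : ℝ))) ''
          (qmap θ ⁻¹' F ∩ {p : (ℂ × ℂ) × ℝ | p.1.1 = 0 ∧ p.1.2 ≠ 0}) ⊆ qmap θ ⁻¹' F := by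
        rintro _ ⟨p, ⟨hpF, hp1, hp2⟩, rfl⟩
        have hm : mrel θ (p.1, p.2 + θ * (k : ℝ)) p :=
          ⟨rfl, rfl, fun h => absurd hp1 h.1, fun _ => ⟨k, by ring⟩,
            fun h => absurd h.2 hp2⟩
        show qmap θ (p.1, p.2 + θ * (k : ℝ)) ∈ F
        rw [qmap_eq hm]; exact hpF
      exact hEc.closure_subset (closure_mono himg
        (image_closure_subset_closure_image hg ⟨_, h1, rfl⟩))
  · rintro ⟨⟨hc1, hc2, hc3⟩, hii, hiii, hiv⟩
    rw [← (isQuotientMap_qmap θ).isClosed_preimage, ← closure_subset_iff_isClosed]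
    have hpush : ∀ (S : Set ((ℂ × ℂ) × ℝ)) (G : Set (Qspace θ)), qmap θ '' S ⊆ G →
        ∀ {p : (ℂ × ℂ) × ℝ}, p ∈ closure (qmap θ ⁻¹' F ∩ S) → qmap θ p ∈ closure (F ∩ G) := by
      intro S G hSG p hp
      refine closure_mono ?_ (image_closure_subset_closure_image (continuous_qmap θ) ⟨p, hp, rfl⟩)
      rintro _ ⟨q, ⟨hqF, hqS⟩, rfl⟩
      exact ⟨hqF, hSG ⟨q, hqS, rfl⟩⟩
    rintro ⟨⟨z₁, z₂⟩, τ⟩ hp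
    have hdec : qmap θ ⁻¹' F =
        (qmap θ ⁻¹' F ∩ {p : (ℂ × ℂ) × ℝ | p.1.1 ≠ 0 ∧ p.1.2 ≠ 0}) ∪
        (qmap θ ⁻¹' F ∩ {p : (ℂ × ℂ) × ℝ | p.1.1 ≠ 0 ∧ p.1.2 = 0}) ∪
        (qmap θ ⁻¹' F ∩ {p : (ℂ × ℂ) × ℝ | p.1.1 = 0 ∧ p.1.2 ≠ 0}) ∪
        (qmap θ ⁻¹' F ∩ {p : (ℂ × ℂ) × ℝ | p.1.1 = 0 ∧ p.1.2 = 0}) := by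
      ext q
      by_cases hq1 : q.1.1 = 0 <;> by_cases hq2 : q.1.2 = 0 <;>
        simp only [Set.mem_union, Set.mem_inter_iff, Set.mem_setOf_eq, hq1, hq2] <;> tauto
    rw [hdec, closure_union, closure_union, closure_union] at hp
    have hz1closed : IsClosed {p : (ℂ × ℂ) × ℝ | p.1.1 = 0} :=
      isClosed_eq continuous_fst.fst continuous_const
    have hz2closed : IsClosed {p : (ℂ × ℂ) × ℝ | p.1.2 = 0} :=
      isClosed_eq continuous_fst.snd continuous_const
    rcases hp with ((h1 | h2) | h3) | h4
    · -- came from Γ₁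
      have hcl : qmap θ ((z₁, z₂), τ) ∈ closure (F ∩ Gamma1 θ) :=
        hpush _ _ subset_rfl h1
      by_cases hz1 : z₁ = 0 <;> by_cases hz2 : z₂ = 0
      · exact hii (z₁, z₂) τ (Or.inr ⟨_, ⟨hz1, hz2⟩, rfl⟩) hcl τ
      · exact hii (z₁, z₂) τ (Or.inl (Or.inr ⟨_, ⟨hz1, hz2⟩, rfl⟩)) hcl τ
      · exact hii (z₁, z₂) τ (Or.inl (Or.inl ⟨_, ⟨hz1, hz2⟩, rfl⟩)) hcl τ
      · exact mem_of_closed_sub hc1 ⟨_, ⟨hz1, hz2⟩, rfl⟩ hcl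
    · -- came from Γ₂'
      have hz2 : z₂ = 0 := by
        have hsub : qmap θ ⁻¹' F ∩ {p : (ℂ × ℂ) × ℝ | p.1.1 ≠ 0 ∧ p.1.2 = 0} ⊆
            {p : (ℂ × ℂ) × ℝ | p.1.2 = 0} := fun q hq => hq.2.2
        exact closure_minimal hsub hz2closed h2
      have hcl : qmap θ ((z₁, z₂), τ) ∈ closure (F ∩ Gamma2' θ) :=
        hpush _ _ subset_rfl h2
      by_cases hz1 : z₁ = 0
      · subst hz1; subst hz2
        simpa using hiii τ hcl 0
      · refine mem_of_closed_sub hc2 (Or.inl ⟨_, ⟨hz1, hz2⟩, rfl⟩) ?_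
        exact closure_mono (Set.inter_subset_inter subset_rfl Set.subset_union_left) hcl
    · -- came from Γ₂''
      have hz1 : z₁ = 0 := by
        have hsub : qmap θ ⁻¹' F ∩ {p : (ℂ × ℂ) × ℝ | p.1.1 = 0 ∧ p.1.2 ≠ 0} ⊆
            {p : (ℂ × ℂ) × ℝ | p.1.1 = 0} := fun q hq => hq.2.1
        exact closure_minimal hsub hz1closed h3
      have hcl : qmap θ ((z₁, z₂), τ) ∈ closure (F ∩ Gamma2'' θ) :=
        hpush _ _ subset_rfl h3
      by_cases hz2 : z₂ = 0
      · subst hz1; subst hz2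
        simpa using hiv τ hcl 0
      · refine mem_of_closed_sub hc2 (Or.inr ⟨_, ⟨hz1, hz2⟩, rfl⟩) ?_
        exact closure_mono (Set.inter_subset_inter subset_rfl Set.subset_union_right) hcl
    · -- came from Γ₃
      have hz1 : z₁ = 0 := by
        have hsub : qmap θ ⁻¹' F ∩ {p : (ℂ × ℂ) × ℝ | p.1.1 = 0 ∧ p.1.2 = 0} ⊆
            {p : (ℂ × ℂ) × ℝ | p.1.1 = 0} := fun q hq => hq.2.1
        exact closure_minimal hsub hz1closed h4
      have hz2 : z₂ = 0 := by
        have hsub : qmap θ ⁻¹' F ∩ {p : (ℂ × ℂ) × ℝ | p.1.1 = 0 ∧ p.1.2 = 0} ⊆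
            {p : (ℂ × ℂ) × ℝ | p.1.2 = 0} := fun q hq => hq.2.2
        exact closure_minimal hsub hz2closed h4
      have hcl : qmap θ ((z₁, z₂), τ) ∈ closure (F ∩ Gamma3 θ) :=
        hpush _ _ subset_rfl h4
      exact mem_of_closed_sub hc3 ⟨_, ⟨hz1, hz2⟩, rfl⟩ hcl
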